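/- Let r ≠ 0, −1, let g be a positive r-convex function on [a,b], and let f : [a,b] → (0,∞) be (g,r)-convex dominated, with f(a) ≠ f(b), g(a) ≠ g(b), and f, g integrable on [a,b] (a < b). Then |(r/(r+1))·(f(a)^{r+1} − f(b)^{r+1})/(f(a)^r − f(b)^r) − (1/(b-a)) ∫_a^b f(x) dx| ≤ (r/(r+1))·(g(a)^{r+1} − g(b)^{r+1})/(g(a)^r − g(b)^r) − (1/(b-a)) ∫_a^b g(x) dx. -/

import Mathlib

open Set intervalIntegral MeasureTheory

lemma integral_lin_rpow (A B a b p : ℝ) (hA : 0 < A) (hB : 0 < B) (hAB : A ≠ B)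
    (hab : a < b) (hp : p ≠ -1) :
    ∫ t in a..b, ((b - t) / (b - a) * A + (1 - (b - t) / (b - a)) * B) ^ p
      = (b - a) * ((B ^ (p + 1) - A ^ (p + 1)) / ((B - A) * (p + 1))) := by
  have hba : (0:ℝ) < b - a := sub_pos.2 hab
  set d := (B - A) / (b - a) with hd
  have hdne : d ≠ 0 := div_ne_zero (sub_ne_zero.2 (Ne.symm hAB)) hba.ne'
  set e := (b * A - a * B) / (b - a) with he
  have hlin : ∀ t : ℝ, (b - t) / (b - a) * A + (1 - (b - t) / (b - a)) * B = d * t + e := by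
    intro t
    rw [hd, he]
    field_simp [hd, he]
    ring
  have h1 : (∫ t in a..b, ((b - t) / (b - a) * A + (1 - (b - t) / (b - a)) * B) ^ p)
      = ∫ t in a..b, (d * t + e) ^ p := by
    congr 1; ext t; rw [hlin t]
  have ha' : d * a + e = A := by rw [hd, he]; field_simp [hd, he]; ring
  have hb' : d * b + e = B := by rw [hd, he]; field_simp [hd, he]; ring
  rw [h1, intervalIntegral.integral_comp_mul_add (fun x => x ^ p) hdne e, ha', hb']
  rw [integral_rpow (Or.inr ⟨hp, by
    intro h
    rcases Set.mem_uIcc.1 h with ⟨h1, _⟩ | ⟨h1, _⟩ <;> linarith⟩)]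
  rw [smul_eq_mul, hd]
  field_simp

-- helper: continuity/integrability of the chord function
lemma chord_intervalIntegrable (A B a b p : ℝ) (hA : 0 < A) (hB : 0 < B) (hab : a < b) :
    IntervalIntegrable (fun t => ((b - t) / (b - a) * A + (1 - (b - t) / (b - a)) * B) ^ p)
      volume a b := by
  have hba : (0:ℝ) < b - a := sub_pos.2 hab
  apply ContinuousOn.intervalIntegrable
  have hpos : ∀ t ∈ Set.uIcc a b, 0 < (b - t) / (b - a) * A + (1 - (b - t) / (b - a)) * B := by
    intro t ht
    rw [Set.uIcc_of_le hab.le] at ht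
    have h1 : 0 ≤ (b - t) / (b - a) := div_nonneg (by linarith [ht.2]) hba.le
    have h2 : (b - t) / (b - a) ≤ 1 := by
      rw [div_le_one hba]; linarith [ht.1]
    nlinarith [mul_nonneg h1 hA.le, mul_nonneg (by linarith : (0:ℝ) ≤ 1 - (b - t) / (b - a)) hB.le]
  intro t ht
  apply ContinuousAt.continuousWithinAt
  have hbase : ContinuousAt (fun t : ℝ => (b - t) / (b - a) * A + (1 - (b - t) / (b - a)) * B) t := by
    fun_prop
  exact hbase.rpow_const (Or.inl (hpos t ht).ne')

lemma gill_arith (X Y A B c r : ℝ) (hr0 : r ≠ 0) (hr1 : r + 1 ≠ 0) (hAB : A ≠ B) (hc : c ≠ 0) :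
    r / (r + 1) * ((X - Y) / (A - B))
      = (1 / c) * (c * ((Y - X) / ((B - A) * (1 / r + 1)))) := by
  have h1 : B - A ≠ 0 := sub_ne_zero.2 (Ne.symm hAB)
  have h2 : A - B ≠ 0 := sub_ne_zero.2 hAB
  have h3 : (1 / r + 1) = (r + 1) / r := by field_simp; ring
  rw [h3, one_div c, inv_mul_cancel_left₀ hc]
  rw [div_mul_div_comm,
    div_eq_div_iff (mul_ne_zero hr1 h2) (mul_ne_zero h1 (div_ne_zero hr1 hr0))]
  field_simp
  ring

theorem r_dominated_gill (f g : ℝ → ℝ) (r a b : ℝ) (hr0 : r ≠ 0) (hr1 : r ≠ -1)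
    (hab : a < b)
    (hgpos : ∀ x ∈ Set.Icc a b, 0 < g x)
    (hfpos : ∀ x ∈ Set.Icc a b, 0 < f x)
    (hg : ∀ x ∈ Set.Icc a b, ∀ y ∈ Set.Icc a b, ∀ l ∈ Set.Icc (0:ℝ) 1,
      g (l * x + (1 - l) * y) ≤ (l * g x ^ r + (1 - l) * g y ^ r) ^ (1 / r))
    (hf : ∀ x ∈ Set.Icc a b, ∀ y ∈ Set.Icc a b, ∀ l ∈ Set.Icc (0:ℝ) 1,
      |(l * f x ^ r + (1 - l) * f y ^ r) ^ (1 / r) - f (l * x + (1 - l) * y)| ≤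
        (l * g x ^ r + (1 - l) * g y ^ r) ^ (1 / r) - g (l * x + (1 - l) * y))
    (hfne : f a ≠ f b) (hgne : g a ≠ g b)
    (hfint : IntervalIntegrable f MeasureTheory.volume a b)
    (hgint : IntervalIntegrable g MeasureTheory.volume a b) :
    |(r / (r + 1)) * ((f a ^ (r + 1) - f b ^ (r + 1)) / (f a ^ r - f b ^ r))
        - (1 / (b - a)) * ∫ x in a..b, f x| ≤
      (r / (r + 1)) * ((g a ^ (r + 1) - g b ^ (r + 1)) / (g a ^ r - g b ^ r))
        - (1 / (b - a)) * ∫ x in a..b, g x := by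
  have hba : (0:ℝ) < b - a := sub_pos.2 hab
  have hr1' : r + 1 ≠ 0 := fun h => hr1 (by linarith)
  have hp : (1:ℝ) / r ≠ -1 := by
    intro h
    apply hr1
    field_simp at h
    linarith
  have ha : a ∈ Set.Icc a b := ⟨le_refl a, hab.le⟩
  have hb : b ∈ Set.Icc a b := ⟨hab.le, le_refl b⟩
  have hfa := hfpos a ha
  have hfb := hfpos b hb
  have hga := hgpos a ha
  have hgb := hgpos b hb
  -- rpow positivity
  have hA : 0 < f a ^ r := Real.rpow_pos_of_pos hfa r
  have hB : 0 < f b ^ r := Real.rpow_pos_of_pos hfb r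
  have hC : 0 < g a ^ r := Real.rpow_pos_of_pos hga r
  have hD : 0 < g b ^ r := Real.rpow_pos_of_pos hgb r
  -- rpow injectivity
  have rpow_ne : ∀ x y : ℝ, 0 < x → 0 < y → x ≠ y → x ^ r ≠ y ^ r := by
    intro x y hx hy hxy h
    apply hxy
    have h2 : (x ^ r) ^ ((1:ℝ)/r) = (y ^ r) ^ ((1:ℝ)/r) := by rw [h]
    rw [← Real.rpow_mul hx.le, ← Real.rpow_mul hy.le, mul_one_div_cancel hr0,
      Real.rpow_one, Real.rpow_one] at h2
    exact h2
  have hAB : f a ^ r ≠ f b ^ r := rpow_ne _ _ hfa hfb hfne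
  have hCD : g a ^ r ≠ g b ^ r := rpow_ne _ _ hga hgb hgne
  -- chord functions
  set u : ℝ → ℝ := fun t =>
    ((b - t) / (b - a) * f a ^ r + (1 - (b - t) / (b - a)) * f b ^ r) ^ ((1:ℝ)/r) with hu
  set v : ℝ → ℝ := fun t =>
    ((b - t) / (b - a) * g a ^ r + (1 - (b - t) / (b - a)) * g b ^ r) ^ ((1:ℝ)/r) with hv
  have hl : ∀ t ∈ Set.Icc a b, (b - t) / (b - a) ∈ Set.Icc (0:ℝ) 1 := by
    intro t ht
    constructor
    · exact div_nonneg (by linarith [ht.2]) hba.le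
    · rw [div_le_one hba]; linarith [ht.1]
  have hcomb : ∀ t : ℝ, (b - t) / (b - a) * a + (1 - (b - t) / (b - a)) * b = t := by
    intro t
    field_simp
    ring
  have hpt : ∀ t ∈ Set.Icc a b, |u t - f t| ≤ v t - g t := by
    intro t ht
    have := hf a ha b hb ((b - t) / (b - a)) (hl t ht)
    rwa [hcomb t] at this
  have hu_int : IntervalIntegrable u volume a b :=
    chord_intervalIntegrable (f a ^ r) (f b ^ r) a b (1/r) hA hB hab
  have hv_int : IntervalIntegrable v volume a b :=
    chord_intervalIntegrable (g a ^ r) (g b ^ r) a b (1/r) hC hD hab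
  -- integral computations
  have hBr : (f b ^ r) ^ ((1:ℝ)/r + 1) = f b ^ (r + 1) := by
    rw [← Real.rpow_mul hfb.le]; congr 1; field_simp; ring
  have hAr : (f a ^ r) ^ ((1:ℝ)/r + 1) = f a ^ (r + 1) := by
    rw [← Real.rpow_mul hfa.le]; congr 1; field_simp; ring
  have hDr : (g b ^ r) ^ ((1:ℝ)/r + 1) = g b ^ (r + 1) := by
    rw [← Real.rpow_mul hgb.le]; congr 1; field_simp; ring
  have hCr : (g a ^ r) ^ ((1:ℝ)/r + 1) = g a ^ (r + 1) := by
    rw [← Real.rpow_mul hga.le]; congr 1; field_simp; ring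
  have hIu : ∫ t in a..b, u t
      = (b - a) * ((f b ^ (r+1) - f a ^ (r+1)) / ((f b ^ r - f a ^ r) * (1/r + 1))) := by
    rw [hu, integral_lin_rpow _ _ _ _ _ hA hB hAB hab hp, hBr, hAr]
  have hIv : ∫ t in a..b, v t
      = (b - a) * ((g b ^ (r+1) - g a ^ (r+1)) / ((g b ^ r - g a ^ r) * (1/r + 1))) := by
    rw [hv, integral_lin_rpow _ _ _ _ _ hC hD hCD hab hp, hDr, hCr]
  -- rewrite the Gill means as averages of u and v
  have hTf : r / (r + 1) * ((f a ^ (r+1) - f b ^ (r+1)) / (f a ^ r - f b ^ r))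
      = (1 / (b - a)) * ∫ t in a..b, u t := by
    rw [hIu]; exact gill_arith _ _ _ _ _ _ hr0 hr1' hAB hba.ne'
  have hTg : r / (r + 1) * ((g a ^ (r+1) - g b ^ (r+1)) / (g a ^ r - g b ^ r))
      = (1 / (b - a)) * ∫ t in a..b, v t := by
    rw [hIv]; exact gill_arith _ _ _ _ _ _ hr0 hr1' hCD hba.ne'
  rw [hTf, hTg, ← mul_sub, ← mul_sub, abs_mul, abs_of_pos (by positivity : (0:ℝ) < 1/(b-a))]
  apply mul_le_mul_of_nonneg_left _ (by positivity : (0:ℝ) ≤ 1/(b-a))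
  -- key integral inequality
  calc |(∫ t in a..b, u t) - ∫ t in a..b, f t|
      = |∫ t in a..b, (u t - f t)| := by rw [intervalIntegral.integral_sub hu_int hfint]
    _ ≤ ∫ t in a..b, |u t - f t| := intervalIntegral.abs_integral_le_integral_abs hab.le
    _ ≤ ∫ t in a..b, (v t - g t) := by
        apply intervalIntegral.integral_mono_on hab.le ((hu_int.sub hfint).abs)
          (hv_int.sub hgint) hpt
    _ = (∫ t in a..b, v t) - ∫ t in a..b, g t := intervalIntegral.integral_sub hv_int hgint
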